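/- Let α₁ ≥ α₂ > 1, θᵢ = arcsin(1/(2αᵢ)), hᵢ = sin 2θᵢ, h₁₂ = sin(2θ₁+2θ₂), a = √(h₁/h₂), c = √(h₂/h₁), b = −h₁₂/√(h₁·h₂), β = 2·sin(θ₁+θ₂), and set λ₁ = (h₁+h₂−h₁₂)/h₂, λ₂ = (h₁+h₂−h₁₂)/h₁, λ₃ = h₁₂/h₁, λ₄ = h₁₂/h₂, λ₅ = β². Then for all x, y, z ∈ ℝᵈ: ‖x−z‖² − λ₁(‖x‖²−‖y‖²) − λ₂(‖y‖²−‖z‖²) − λ₃(‖y−z‖² − ‖z‖²/α₁²) − λ₄(‖x−y‖² − ‖y‖²/α₂²) − λ₅(‖z‖² − 1) = β² − ‖a·x + b·y + c·z‖². -/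

import Mathlib

set_option maxHeartbeats 2000000

theorem stmt_11 (d : ℕ) (α₁ α₂ : ℝ) (h12 : α₂ ≤ α₁) (h2 : 1 < α₂)
    (θ₁ θ₂ h₁ h₂ h₁₂ a b c β l₁ l₂ l₃ l₄ l₅ : ℝ)
    (hθ₁ : θ₁ = Real.arcsin (1 / (2 * α₁)))
    (hθ₂ : θ₂ = Real.arcsin (1 / (2 * α₂)))
    (hh₁ : h₁ = Real.sin (2 * θ₁)) (hh₂ : h₂ = Real.sin (2 * θ₂))
    (hh₁₂ : h₁₂ = Real.sin (2 * θ₁ + 2 * θ₂))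
    (ha : a = Real.sqrt (h₁ / h₂)) (hc : c = Real.sqrt (h₂ / h₁))
    (hb : b = -h₁₂ / Real.sqrt (h₁ * h₂))
    (hβ : β = 2 * Real.sin (θ₁ + θ₂))
    (hl₁ : l₁ = (h₁ + h₂ - h₁₂) / h₂) (hl₂ : l₂ = (h₁ + h₂ - h₁₂) / h₁)
    (hl₃ : l₃ = h₁₂ / h₁) (hl₄ : l₄ = h₁₂ / h₂) (hl₅ : l₅ = β ^ 2) :
    ∀ x y z : EuclideanSpace ℝ (Fin d),
      ‖x - z‖ ^ 2 - l₁ * (‖x‖ ^ 2 - ‖y‖ ^ 2) - l₂ * (‖y‖ ^ 2 - ‖z‖ ^ 2)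
        - l₃ * (‖y - z‖ ^ 2 - ‖z‖ ^ 2 / α₁ ^ 2)
        - l₄ * (‖x - y‖ ^ 2 - ‖y‖ ^ 2 / α₂ ^ 2)
        - l₅ * (‖z‖ ^ 2 - 1)
      = β ^ 2 - ‖a • x + b • y + c • z‖ ^ 2 := by
  have hα₁ : (1:ℝ) < α₁ := lt_of_lt_of_le h2 h12
  have hα₁0 : (0:ℝ) < α₁ := by linarith
  have hα₂0 : (0:ℝ) < α₂ := by linarith
  have hne1 : (α₁:ℝ) ≠ 0 := ne_of_gt hα₁0
  have hne2 : (α₂:ℝ) ≠ 0 := ne_of_gt hα₂0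
  have hb1 : (0:ℝ) < 1 / (2 * α₁) ∧ (1 / (2 * α₁) : ℝ) < 1 := by
    constructor
    · positivity
    · rw [div_lt_one (by linarith)]; linarith
  have hb2 : (0:ℝ) < 1 / (2 * α₂) ∧ (1 / (2 * α₂) : ℝ) < 1 := by
    constructor
    · positivity
    · rw [div_lt_one (by linarith)]; linarith
  have hs1 : Real.sin θ₁ = 1 / (2 * α₁) := by
    rw [hθ₁, Real.sin_arcsin (by linarith [hb1.1]) hb1.2.le]
  have hs2 : Real.sin θ₂ = 1 / (2 * α₂) := by
    rw [hθ₂, Real.sin_arcsin (by linarith [hb2.1]) hb2.2.le]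
  have hcos1 : 0 < Real.cos θ₁ := by
    rw [hθ₁, Real.cos_arcsin]
    apply Real.sqrt_pos.2; nlinarith [hb1.1, hb1.2]
  have hcos2 : 0 < Real.cos θ₂ := by
    rw [hθ₂, Real.cos_arcsin]
    apply Real.sqrt_pos.2; nlinarith [hb2.1, hb2.2]
  have hsin1 : 0 < Real.sin θ₁ := by rw [hs1]; exact hb1.1
  have hsin2 : 0 < Real.sin θ₂ := by rw [hs2]; exact hb2.1
  have hh₁pos : 0 < h₁ := by rw [hh₁, Real.sin_two_mul]; positivity
  have hh₂pos : 0 < h₂ := by rw [hh₂, Real.sin_two_mul]; positivity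
  have hneh₁ : h₁ ≠ 0 := hh₁pos.ne'
  have hneh₂ : h₂ ≠ 0 := hh₂pos.ne'
  have hinv1 : 1 / α₁ ^ 2 = 2 - 2 * Real.cos (2 * θ₁) := by
    have e : Real.cos (2*θ₁) = 1 - 2 * Real.sin θ₁ ^ 2 := by
      rw [Real.cos_two_mul']; linarith [Real.sin_sq_add_cos_sq θ₁]
    rw [e, hs1]; field_simp; ring
  have hinv2 : 1 / α₂ ^ 2 = 2 - 2 * Real.cos (2 * θ₂) := by
    have e : Real.cos (2*θ₂) = 1 - 2 * Real.sin θ₂ ^ 2 := by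
      rw [Real.cos_two_mul']; linarith [Real.sin_sq_add_cos_sq θ₂]
    rw [e, hs2]; field_simp; ring
  set c₁ := Real.cos (2 * θ₁) with hc₁
  set c₂ := Real.cos (2 * θ₂) with hc₂
  have hpy1 : h₁ ^ 2 + c₁ ^ 2 = 1 := by rw [hh₁]; exact Real.sin_sq_add_cos_sq _
  have hpy2 : h₂ ^ 2 + c₂ ^ 2 = 1 := by rw [hh₂]; exact Real.sin_sq_add_cos_sq _
  have hadd : h₁₂ = h₁ * c₂ + c₁ * h₂ := by
    rw [hh₁₂, hh₁, hh₂, hc₁, hc₂, Real.sin_add]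
  have hβ2 : β ^ 2 = 2 - 2 * (c₁ * c₂ - h₁ * h₂) := by
    have hcadd : Real.cos (2*θ₁ + 2*θ₂) = c₁ * c₂ - h₁ * h₂ := by
      rw [hh₁, hh₂, hc₁, hc₂, Real.cos_add]
    have h2' : Real.cos (2*θ₁ + 2*θ₂) = 1 - 2 * Real.sin (θ₁ + θ₂) ^ 2 := by
      have he : (2*θ₁ + 2*θ₂) = 2 * (θ₁ + θ₂) := by ring
      rw [he, Real.cos_two_mul']
      linarith [Real.sin_sq_add_cos_sq (θ₁ + θ₂)]
    rw [hβ, ← hcadd, h2']; ring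
  -- sqrt facts
  have hsq1 : Real.sqrt h₁ ^ 2 = h₁ := Real.sq_sqrt hh₁pos.le
  have hsq2 : Real.sqrt h₂ ^ 2 = h₂ := Real.sq_sqrt hh₂pos.le
  have hsp1 : Real.sqrt h₁ ≠ 0 := ne_of_gt (Real.sqrt_pos.2 hh₁pos)
  have hsp2 : Real.sqrt h₂ ≠ 0 := ne_of_gt (Real.sqrt_pos.2 hh₂pos)
  have ha' : a = Real.sqrt h₁ / Real.sqrt h₂ := by rw [ha, Real.sqrt_div hh₁pos.le]
  have hc' : c = Real.sqrt h₂ / Real.sqrt h₁ := by rw [hc, Real.sqrt_div hh₂pos.le]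
  have hb' : b = -h₁₂ / (Real.sqrt h₁ * Real.sqrt h₂) := by
    rw [hb, Real.sqrt_mul hh₁pos.le]
  have ha2 : a ^ 2 = h₁ / h₂ := by rw [ha', div_pow, hsq1, hsq2]
  have hc2 : c ^ 2 = h₂ / h₁ := by rw [hc', div_pow, hsq1, hsq2]
  have hb2' : b ^ 2 = h₁₂ ^ 2 / (h₁ * h₂) := by
    rw [hb', div_pow, mul_pow, hsq1, hsq2, neg_pow]; ring
  have hab : a * b = -(h₁₂ / h₂) := by
    have e1 : a * b = (Real.sqrt h₁ * -h₁₂) / (Real.sqrt h₁ * Real.sqrt h₂ ^ 2) := by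
      rw [ha', hb']; ring
    rw [e1, hsq2, mul_div_mul_left _ _ hsp1, neg_div]
  have hbc : b * c = -(h₁₂ / h₁) := by
    have e1 : b * c = (Real.sqrt h₂ * -h₁₂) / (Real.sqrt h₂ * Real.sqrt h₁ ^ 2) := by
      rw [hc', hb']; ring
    rw [e1, hsq1, mul_div_mul_left _ _ hsp2, neg_div]
  have hac : a * c = 1 := by
    rw [ha', hc', div_mul_div_comm, mul_comm (Real.sqrt h₂) (Real.sqrt h₁)]
    exact div_self (mul_ne_zero hsp1 hsp2)
  -- coefficient equations
  have E1 : 1 - l₁ - l₄ = -a ^ 2 := by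
    rw [hl₁, hl₄, ha2]; field_simp; ring
  have E4 : l₄ = -(a * b) := by rw [hab, hl₄]; ring
  have E6 : l₃ = -(b * c) := by rw [hbc, hl₃]; ring
  have E2 : l₁ - l₂ - l₃ - l₄ + l₄ / α₂ ^ 2 = -b ^ 2 := by
    have hr : l₄ / α₂ ^ 2 = l₄ * (2 - 2 * c₂) := by rw [← hinv2]; ring
    rw [hr, hl₁, hl₂, hl₃, hl₄, hb2']
    field_simp
    linear_combination (h₁₂ - h₁*c₂ + c₁*h₂) * hadd
      + (h₂^2) * hpy1 - (h₁^2) * hpy2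
  have E3 : 1 + l₂ - l₃ + l₃ / α₁ ^ 2 - l₅ = -c ^ 2 := by
    have hr : l₃ / α₁ ^ 2 = l₃ * (2 - 2 * c₁) := by rw [← hinv1]; ring
    rw [hr, hl₂, hl₃, hl₅, hβ2, hc2]
    field_simp
    linear_combination (-(2*c₁)) * hadd - (2*h₂) * hpy1
  intro x y z
  have key : ‖a • x + b • y + c • z‖ ^ 2
      = a^2*‖x‖^2 + b^2*‖y‖^2 + c^2*‖z‖^2
        + 2*(a*b)*(inner ℝ x y : ℝ) + 2*(a*c)*(inner ℝ x z : ℝ) + 2*(b*c)*(inner ℝ y z : ℝ) := by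
    simp only [norm_add_sq_real, inner_add_left, real_inner_smul_left,
      real_inner_smul_right, norm_smul, mul_pow, sq_abs, Real.norm_eq_abs]
    ring
  have exz : ‖x - z‖ ^ 2 = ‖x‖^2 - 2*(inner ℝ x z : ℝ) + ‖z‖^2 := by
    rw [norm_sub_sq_real]
  have eyz : ‖y - z‖ ^ 2 = ‖y‖^2 - 2*(inner ℝ y z : ℝ) + ‖z‖^2 := by
    rw [norm_sub_sq_real]
  have exy : ‖x - y‖ ^ 2 = ‖x‖^2 - 2*(inner ℝ x y : ℝ) + ‖y‖^2 := by
    rw [norm_sub_sq_real]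
  rw [key, exz, eyz, exy]
  linear_combination ‖x‖^2 * E1 + ‖y‖^2 * E2 + ‖z‖^2 * E3
    + 2*(inner ℝ x y : ℝ) * E4 + 2*(inner ℝ x z : ℝ) * hac + 2*(inner ℝ y z : ℝ) * E6 + hl₅
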